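/- Let G = (V,E) be a finite simple graph without isolated vertices. If every non-pendant edge of G is incident to a pendant edge, then the function γ(F) = α(G[V⟨F⟩]) is supermodular: for all S ⊆ T ⊆ E \ {e} and any edge e, γ(S ∪ {e}) − γ(S) ≤ γ(T ∪ {e}) − γ(T). -/

import Mathlib

/-- `closedVerts G F` is V⟨F⟩: the set of vertices of `G` all of whose incident
edges belong to `F`. -/
def closedVerts {V : Type*} (G : SimpleGraph V) (F : Set (Sym2 V)) : Set V :=
  {v | ∀ e ∈ G.edgeSet, v ∈ e → e ∈ F}

/-- `s` is an independent set of the induced subgraph `G[A]`. -/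
def IsIndepOn {V : Type*} (G : SimpleGraph V) (A : Set V) (s : Finset V) : Prop :=
  ↑s ⊆ A ∧ ∀ u ∈ s, ∀ v ∈ s, ¬ G.Adj u v

/-- `gamma G F = α(G[V⟨F⟩])`, the maximum size of an independent set of the
subgraph of `G` induced on `closedVerts G F`. -/
noncomputable def gamma {V : Type*} [Fintype V] (G : SimpleGraph V) (F : Set (Sym2 V)) : ℕ :=
  sSup {n | ∃ s : Finset V, IsIndepOn G (closedVerts G F) s ∧ s.card = n}

section Aux

open Finset

variable {V : Type*} [Fintype V] [DecidableEq V] {G : SimpleGraph V}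

set_option linter.unusedSectionVars false

lemma bddAbove_aux (G : SimpleGraph V) (F : Set (Sym2 V)) :
    BddAbove {n | ∃ s : Finset V, IsIndepOn G (closedVerts G F) s ∧ s.card = n} :=
  ⟨Fintype.card V, by rintro n ⟨s, _, rfl⟩; exact s.card_le_univ⟩

lemma le_gamma {F : Set (Sym2 V)} {s : Finset V}
    (h : IsIndepOn G (closedVerts G F) s) : s.card ≤ gamma G F :=
  le_csSup (bddAbove_aux G F) ⟨s, h, rfl⟩

lemma exists_max (G : SimpleGraph V) (F : Set (Sym2 V)) :
    ∃ s : Finset V, IsIndepOn G (closedVerts G F) s ∧ s.card = gamma G F :=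
by
  have hne : {n | ∃ s : Finset V, IsIndepOn G (closedVerts G F) s ∧ s.card = n}.Nonempty := by
    refine ⟨0, ∅, ⟨?_, ?_⟩, rfl⟩ <;> simp
  exact Nat.sSup_mem hne (bddAbove_aux G F)

lemma closed_mono {F F' : Set (Sym2 V)} (h : F ⊆ F') :
    closedVerts G F ⊆ closedVerts G F' :=
  fun _ hv g hg hvg => h (hv g hg hvg)

lemma gamma_mono {F F' : Set (Sym2 V)} (h : F ⊆ F') : gamma G F ≤ gamma G F' := by
  obtain ⟨s, ⟨hsub, hind⟩, hcard⟩ := exists_max G F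
  rw [← hcard]
  exact le_gamma ⟨hsub.trans (closed_mono h), hind⟩

lemma uniq_nbr [DecidableRel G.Adj] {w y u : V} (hd : G.degree w = 1)
    (hy : G.Adj w y) (hu : G.Adj w u) : u = y := by
  have hd' : (G.neighborFinset w).card = 1 := hd
  obtain ⟨c, hc⟩ := Finset.card_eq_one.mp hd'
  have h1 : y ∈ G.neighborFinset w := by rwa [SimpleGraph.mem_neighborFinset]
  have h2 : u ∈ G.neighborFinset w := by rwa [SimpleGraph.mem_neighborFinset]
  rw [hc, Finset.mem_singleton] at h1 h2
  rw [h2, h1]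

lemma edge_eq [DecidableRel G.Adj] {w y : V} (hd : G.degree w = 1) (hy : G.Adj w y)
    {g : Sym2 V} (hg : g ∈ G.edgeSet) (hw : w ∈ g) : g = s(w, y) := by
  induction g using Sym2.ind with
  | _ x1 x2 =>
    rw [SimpleGraph.mem_edgeSet] at hg
    rcases Sym2.mem_iff.mp hw with rfl | rfl
    · rw [uniq_nbr hd hy hg]
    · rw [uniq_nbr hd hy hg.symm, Sym2.eq_swap]

lemma mem_closed_of_deg1 [DecidableRel G.Adj] {w y : V} (hd : G.degree w = 1)
    (hy : G.Adj w y) {F : Set (Sym2 V)} (hF : s(w, y) ∈ F) :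
    w ∈ closedVerts G F := by
  intro g hg hwg
  rw [edge_eq hd hy hg hwg]
  exact hF

lemma adj_of_mem {f : Sym2 V} (hf : f ∈ G.edgeSet) {x y : V}
    (hx : x ∈ f) (hy : y ∈ f) (hxy : x ≠ y) : G.Adj x y := by
  induction f using Sym2.ind with
  | _ u v =>
    rw [SimpleGraph.mem_edgeSet] at hf
    rcases Sym2.mem_iff.mp hx with rfl | rfl <;>
      rcases Sym2.mem_iff.mp hy with rfl | rfl
    · exact absurd rfl hxy
    · exact hf
    · exact hf.symm
    · exact absurd rfl hxy

/-- Adding one edge to `F` increases `gamma` by at most one. -/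
lemma gamma_add_le {a b : V} (hab : G.Adj a b) (F : Set (Sym2 V)) :
    gamma G (insert s(a, b) F) ≤ gamma G F + 1 := by
  obtain ⟨s, ⟨hsub, hind⟩, hcard⟩ := exists_max G (insert s(a, b) F)
  have key : ∀ v ∈ s, v ≠ a → v ≠ b → v ∈ closedVerts G F := by
    intro v hv hva hvb g hg hvg
    rcases Set.mem_insert_iff.mp (hsub hv g hg hvg) with rfl | h
    · rcases Sym2.mem_iff.mp hvg with rfl | rfl
      · exact absurd rfl hva
      · exact absurd rfl hvb
    · exact h
  by_cases ha : a ∈ s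
  · have hb : b ∉ s := fun hb => hind a ha b hb hab
    have h1 : IsIndepOn G (closedVerts G F) (s.erase a) := by
      constructor
      · intro v hv
        have hv' : v ∈ s.erase a := hv
        exact key v (mem_of_mem_erase hv') (ne_of_mem_erase hv')
          (fun h => hb (h ▸ mem_of_mem_erase hv'))
      · intro u hu v hv
        exact hind u (mem_of_mem_erase hu) v (mem_of_mem_erase hv)
    have h2 := le_gamma h1
    have h3 : s.card - 1 ≤ (s.erase a).card := Finset.pred_card_le_card_erase
    have h4 : 1 ≤ s.card := Finset.card_pos.mpr ⟨a, ha⟩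
    omega
  · have h1 : IsIndepOn G (closedVerts G F) (s.erase b) := by
      constructor
      · intro v hv
        have hv' : v ∈ s.erase b := hv
        exact key v (mem_of_mem_erase hv')
          (fun h => ha (h ▸ mem_of_mem_erase hv')) (ne_of_mem_erase hv')
      · intro u hu v hv
        exact hind u (mem_of_mem_erase hu) v (mem_of_mem_erase hv)
    have h2 := le_gamma h1
    have h3 : s.card - 1 ≤ (s.erase b).card := Finset.pred_card_le_card_erase
    omega

/-- Swapping a vertex `v` for a degree-one vertex `w` whose unique neighbour is `v`. -/
lemma swap_indep (A : Set V) {s : Finset V} (hind : ∀ u ∈ s, ∀ v ∈ s, ¬ G.Adj u v)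
    {v w : V} (hv : v ∈ s) (hsub : ↑(s.erase v) ⊆ A) (hwA : w ∈ A)
    (hw : ∀ u, G.Adj w u → u = v) (hadj : G.Adj w v) :
    IsIndepOn G A (insert w (s.erase v)) ∧ (insert w (s.erase v)).card = s.card := by
  have hws : w ∉ s := fun hws => hind w hws v hv hadj
  have hwe : w ∉ s.erase v := fun h => hws (mem_of_mem_erase h)
  refine ⟨⟨?_, ?_⟩, ?_⟩
  · intro x hx
    have hx' : x ∈ insert w (s.erase v) := hx
    rcases Finset.mem_insert.mp hx' with rfl | h
    · exact hwA
    · exact hsub h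
  · intro x hx y hy
    rcases Finset.mem_insert.mp hx with rfl | hx' <;>
      rcases Finset.mem_insert.mp hy with rfl | hy'
    · exact fun h => G.loopless.irrefl _ h
    · intro h
      exact ne_of_mem_erase hy' (hw y h)
    · intro h
      exact ne_of_mem_erase hx' (hw x h.symm)
    · exact hind x (mem_of_mem_erase hx') y (mem_of_mem_erase hy')
  · rw [Finset.card_insert_of_notMem hwe, Finset.card_erase_of_mem hv]
    have : 1 ≤ s.card := Finset.card_pos.mpr ⟨v, hv⟩
    omega

/-- If `e = s(a,b)` is a non-pendant edge with a pendant edge at `a`, and adding `e`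
to `F` increases `gamma`, then all other edges at `b` lie in `F` and `b` has no
pendant neighbour. -/
lemma gain_crit [DecidableRel G.Adj] {a b w : V} (hab : G.Adj a b) (haw : G.Adj a w)
    (hw : G.degree w = 1) (hna : G.degree a ≠ 1) (hnb : G.degree b ≠ 1)
    {F : Set (Sym2 V)} (hgain : gamma G F < gamma G (insert s(a, b) F)) :
    (∀ g ∈ G.edgeSet, b ∈ g → g ≠ s(a, b) → g ∈ F) ∧
      (∀ u, G.Adj b u → G.degree u ≠ 1) := by
  obtain ⟨I, ⟨hsub, hind⟩, hcard⟩ := exists_max G (insert s(a, b) F)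
  have key : ∀ v ∈ I, v ≠ a → v ≠ b → v ∈ closedVerts G F := by
    intro v hv hva hvb g hg hvg
    rcases Set.mem_insert_iff.mp (hsub hv g hg hvg) with rfl | h
    · rcases Sym2.mem_iff.mp hvg with rfl | rfl
      · exact absurd rfl hva
      · exact absurd rfl hvb
    · exact h
  have hwa : ∀ u, G.Adj w u → u = a := fun u hu => uniq_nbr hw haw.symm hu
  -- a ∉ I
  have haI : a ∉ I := by
    intro haI
    have hbI : b ∉ I := fun hbI => hind a haI b hbI hab
    have hfa : s(a, w) ∈ F := by
      have := hsub haI s(a, w) (G.mem_edgeSet.mpr haw) (Sym2.mem_iff.mpr (Or.inl rfl))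
      rcases Set.mem_insert_iff.mp this with h | h
      · exfalso
        have hwb : w = b := by
          rcases Sym2.eq_iff.mp h with ⟨_, h2⟩ | ⟨h1, _⟩
          · exact h2
          · exact absurd h1 (G.ne_of_adj hab)
        rw [hwb] at hw
        exact hnb hw
      · exact h
    have hwF : w ∈ closedVerts G F := mem_closed_of_deg1 hw haw.symm (by rwa [← Sym2.eq_swap] at hfa)
    have hesub : ↑(I.erase a) ⊆ closedVerts G F := by
      intro v hv
      have hv' : v ∈ I.erase a := hv
      exact key v (mem_of_mem_erase hv') (ne_of_mem_erase hv')
        (fun h => hbI (h ▸ mem_of_mem_erase hv'))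
    obtain ⟨hII, hIc⟩ := swap_indep (closedVerts G F) hind haI hesub hwF hwa haw.symm
    have := le_gamma hII
    omega
  -- b ∈ I
  have hbI : b ∈ I := by
    by_contra hbI
    have : IsIndepOn G (closedVerts G F) I :=
      ⟨fun v hv => key v hv (fun h => haI (h ▸ hv)) (fun h => hbI (h ▸ hv)), hind⟩
    have := le_gamma this
    omega
  have hbC : b ∈ closedVerts G (insert s(a, b) F) := hsub hbI
  have hbF : ∀ g ∈ G.edgeSet, b ∈ g → g ≠ s(a, b) → g ∈ F := by
    intro g hg hbg hne
    rcases Set.mem_insert_iff.mp (hbC g hg hbg) with h | h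
    · exact absurd h hne
    · exact h
  refine ⟨hbF, ?_⟩
  intro w' hbw' hw'
  -- swap b for its pendant neighbour w'
  have hne : s(b, w') ≠ s(a, b) := by
    intro h
    rcases Sym2.eq_iff.mp h with ⟨h1, _⟩ | ⟨h1, h2⟩
    · exact G.ne_of_adj hab h1.symm
    · rw [h2] at hw'
      exact hna hw'
  have hfb : s(b, w') ∈ F :=
    hbF s(b, w') (G.mem_edgeSet.mpr hbw') (Sym2.mem_iff.mpr (Or.inl rfl)) hne
  have hw'C : w' ∈ closedVerts G F :=
    mem_closed_of_deg1 hw' hbw'.symm (by rwa [← Sym2.eq_swap] at hfb)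
  have hesub : ↑(I.erase b) ⊆ closedVerts G F := by
    intro v hv
    have hv' : v ∈ I.erase b := hv
    exact key v (mem_of_mem_erase hv') (fun h => haI (h ▸ mem_of_mem_erase hv'))
      (ne_of_mem_erase hv')
  obtain ⟨hII, hIc⟩ := swap_indep (closedVerts G F) hind hbI hesub hw'C
    (fun u hu => uniq_nbr hw' hbw'.symm hu) hbw'.symm
  have := le_gamma hII
  omega

/-- Transfer: if all edges at `b` except `e` lie in `T`, `b` has no pendant neighbour,
and each neighbour of `b` has a pendant neighbour, then adding `e` to `T` gains one. -/
lemma transfer [DecidableRel G.Adj] {a b : V} (hab : G.Adj a b) (hnb : G.degree b ≠ 1)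
    {T : Set (Sym2 V)} (hbT : ∀ g ∈ G.edgeSet, b ∈ g → g ≠ s(a, b) → g ∈ T)
    (hT : T ⊆ G.edgeSet \ {s(a, b)})
    (hP : ∀ y, G.Adj b y → ∃ z, G.Adj y z ∧ G.degree z = 1)
    (hnopend : ∀ u, G.Adj b u → G.degree u ≠ 1) :
    gamma G T + 1 ≤ gamma G (insert s(a, b) T) := by
  classical
  choose! z hz1 hz2 using hP
  obtain ⟨I, ⟨hsub, hind⟩, hcard⟩ := exists_max G T
  have heT : s(a, b) ∉ T := fun h => (hT h).2 rfl
  have hbA : b ∉ closedVerts G T := by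
    intro h
    exact heT (h s(a, b) (G.mem_edgeSet.mpr hab) (Sym2.mem_iff.mpr (Or.inr rfl)))
  set φ : V → V := fun y => if G.Adj b y then z y else y with hφ
  -- basic facts
  have hzI : ∀ y ∈ I, G.Adj b y → z y ∉ I := by
    intro y hy hby hzy
    exact hind y hy (z y) hzy (hz1 y hby)
  have hzA : ∀ y ∈ I, G.Adj b y → z y ∈ closedVerts G T := by
    intro y hy hby
    have hyA : y ∈ closedVerts G T := hsub hy
    have : s(z y, y) ∈ T := by
      apply hyA
      · exact G.mem_edgeSet.mpr (hz1 y hby).symm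
      · exact Sym2.mem_iff.mpr (Or.inr rfl)
    exact mem_closed_of_deg1 (hz2 y hby) (hz1 y hby).symm this
  have hinj : Set.InjOn φ ↑I := by
    intro y1 h1 y2 h2 heq
    have h1' : y1 ∈ I := h1
    have h2' : y2 ∈ I := h2
    by_cases hb1 : G.Adj b y1 <;> by_cases hb2 : G.Adj b y2
    · simp only [hφ, if_pos hb1, if_pos hb2] at heq
      have e1 : G.Adj (z y1) y1 := (hz1 y1 hb1).symm
      have e2 : G.Adj (z y1) y2 := heq ▸ (hz1 y2 hb2).symm
      exact (uniq_nbr (hz2 y1 hb1) e1 e2).symm ▸ rfl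
    · simp only [hφ, if_pos hb1, if_neg hb2] at heq
      exact absurd (heq ▸ h2') (hzI y1 h1' hb1)
    · simp only [hφ, if_neg hb1, if_pos hb2] at heq
      exact absurd (heq ▸ h1') (hzI y2 h2' hb2)
    · simpa [hφ, if_neg hb1, if_neg hb2] using heq
  set I' : Finset V := I.image φ with hI'
  have hI'card : I'.card = I.card := Finset.card_image_of_injOn hinj
  have hI'A : ↑I' ⊆ closedVerts G T := by
    intro x hx
    have hx' : x ∈ I' := hx
    obtain ⟨y, hy, rfl⟩ := Finset.mem_image.mp hx'
    by_cases hby : G.Adj b y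
    · simpa [hφ, if_pos hby] using hzA y hy hby
    · simpa [hφ, if_neg hby] using hsub hy
  have hI'ind : ∀ u ∈ I', ∀ v ∈ I', ¬ G.Adj u v := by
    intro u hu v hv
    obtain ⟨y1, hy1, rfl⟩ := Finset.mem_image.mp hu
    obtain ⟨y2, hy2, rfl⟩ := Finset.mem_image.mp hv
    by_cases hb1 : G.Adj b y1 <;> by_cases hb2 : G.Adj b y2 <;>
      simp only [hφ, if_pos, if_neg, *] <;> intro hAdj
    · -- z y1 adj z y2
      have : z y2 = y1 := uniq_nbr (hz2 y1 hb1) (hz1 y1 hb1).symm hAdj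
      exact hnopend y1 hb1 (this ▸ hz2 y2 hb2)
    · -- z y1 adj y2
      have : y2 = y1 := uniq_nbr (hz2 y1 hb1) (hz1 y1 hb1).symm hAdj
      exact hb2 (this ▸ hb1)
    · -- y1 adj z y2
      have : y1 = y2 := uniq_nbr (hz2 y2 hb2) (hz1 y2 hb2).symm hAdj.symm
      exact hb1 (this ▸ hb2)
    · exact hind y1 hy1 y2 hy2 hAdj
  have hbI' : b ∉ I' := fun h => hbA (hI'A h)
  have hbadj : ∀ v ∈ I', ¬ G.Adj b v := by
    intro v hv
    obtain ⟨y, hy, rfl⟩ := Finset.mem_image.mp hv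
    by_cases hby : G.Adj b y
    · simp only [hφ, if_pos hby]
      intro hAdj
      exact hnopend (z y) hAdj (hz2 y hby)
    · simpa [hφ, if_neg hby] using hby
  have hfinal : IsIndepOn G (closedVerts G (insert s(a, b) T)) (insert b I') := by
    constructor
    · intro x hx
      have hx' : x ∈ insert b I' := hx
      rcases Finset.mem_insert.mp hx' with heq | h
      · rw [heq]
        intro g hg hbg
        by_cases hge : g = s(a, b)
        · exact hge ▸ Set.mem_insert _ _
        · exact Set.mem_insert_iff.mpr (Or.inr (hbT g hg hbg hge))
      · exact closed_mono (Set.subset_insert _ _) (hI'A h)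
    · intro u hu v hv
      rcases Finset.mem_insert.mp hu with rfl | hu' <;>
        rcases Finset.mem_insert.mp hv with rfl | hv'
      · exact fun h => G.loopless.irrefl _ h
      · exact hbadj v hv'
      · exact fun h => hbadj u hu' h.symm
      · exact hI'ind u hu' v hv'
  have := le_gamma hfinal
  rw [Finset.card_insert_of_notMem hbI', hI'card] at this
  omega

/-- Case where `e` is a pendant edge at `a`: adding `e` always gains one. -/
lemma case1 [DecidableRel G.Adj] {a b : V} (hab : G.Adj a b) (hda : G.degree a = 1)
    {T : Set (Sym2 V)} (hT : T ⊆ G.edgeSet \ {s(a, b)}) :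
    gamma G T + 1 ≤ gamma G (insert s(a, b) T) := by
  obtain ⟨J, ⟨hsub, hind⟩, hcard⟩ := exists_max G T
  have heT : s(a, b) ∉ T := fun h => (hT h).2 rfl
  have haJ : a ∉ J := by
    intro h
    exact heT (hsub h s(a, b) (G.mem_edgeSet.mpr hab) (Sym2.mem_iff.mpr (Or.inl rfl)))
  have hbJ : b ∉ J := by
    intro h
    exact heT (hsub h s(a, b) (G.mem_edgeSet.mpr hab) (Sym2.mem_iff.mpr (Or.inr rfl)))
  have hfinal : IsIndepOn G (closedVerts G (insert s(a, b) T)) (insert a J) := by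
    constructor
    · intro x hx
      have hx' : x ∈ insert a J := hx
      rcases Finset.mem_insert.mp hx' with rfl | h
      · intro g hg hxg
        rw [edge_eq hda hab hg hxg]
        exact Set.mem_insert _ _
      · exact closed_mono (Set.subset_insert _ _) (hsub h)
    · intro u hu v hv
      rcases Finset.mem_insert.mp hu with rfl | hu' <;>
        rcases Finset.mem_insert.mp hv with rfl | hv'
      · exact fun h => G.loopless.irrefl _ h
      · intro h
        exact hbJ ((uniq_nbr hda hab h) ▸ hv')
      · intro h
        exact hbJ ((uniq_nbr hda hab h.symm) ▸ hu')
      · exact hind u hu' v hv'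
  have := le_gamma hfinal
  rw [Finset.card_insert_of_notMem haJ] at this
  omega

/-- Case where `e = s(a,b)` is non-pendant and there is a pendant edge at `a`. -/
lemma case2 [DecidableRel G.Adj] {a b w : V} (hab : G.Adj a b) (haw : G.Adj a w)
    (hw : G.degree w = 1) (hna : G.degree a ≠ 1) (hnb : G.degree b ≠ 1)
    (hcond : ∀ e ∈ G.edgeSet, (¬ ∃ v ∈ e, G.degree v = 1) →
      ∃ f ∈ G.edgeSet, (∃ v ∈ f, G.degree v = 1) ∧ ∃ u : V, u ∈ e ∧ u ∈ f)
    {S T : Set (Sym2 V)} (hST : S ⊆ T) (hT : T ⊆ G.edgeSet \ {s(a, b)}) :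
    gamma G (insert s(a, b) S) + gamma G T ≤ gamma G (insert s(a, b) T) + gamma G S := by
  by_cases hg : gamma G (insert s(a, b) S) ≤ gamma G S
  · have := gamma_mono (G := G) (Set.subset_insert s(a, b) T)
    omega
  push_neg at hg
  obtain ⟨hbS, hnopend⟩ := gain_crit hab haw hw hna hnb hg
  have hbT : ∀ g ∈ G.edgeSet, b ∈ g → g ≠ s(a, b) → g ∈ T :=
    fun g h1 h2 h3 => hST (hbS g h1 h2 h3)
  have hP : ∀ y, G.Adj b y → ∃ z, G.Adj y z ∧ G.degree z = 1 := by
    intro y hy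
    by_cases hya : y = a
    · exact ⟨w, hya ▸ haw, hw⟩
    have hyd : G.degree y ≠ 1 := hnopend y hy
    have hgE : s(b, y) ∈ G.edgeSet := G.mem_edgeSet.mpr hy
    have hnp : ¬ ∃ v ∈ s(b, y), G.degree v = 1 := by
      rintro ⟨v, hv, hvd⟩
      rcases Sym2.mem_iff.mp hv with rfl | rfl
      · exact hnb hvd
      · exact hyd hvd
    obtain ⟨f, hf, ⟨v', hv'f, hv'd⟩, u', hu'g, hu'f⟩ := hcond s(b, y) hgE hnp
    have hu'v' : u' ≠ v' := by
      rintro rfl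
      rcases Sym2.mem_iff.mp hu'g with rfl | rfl
      · exact hnb hv'd
      · exact hyd hv'd
    have hadj : G.Adj u' v' := adj_of_mem hf hu'f hv'f hu'v'
    rcases Sym2.mem_iff.mp hu'g with rfl | rfl
    · exact absurd hv'd (hnopend v' hadj)
    · exact ⟨v', hadj, hv'd⟩
  have h1 := transfer hab hnb hbT hT hP hnopend
  have h2 := gamma_add_le hab S
  omega

end Aux

theorem stmt6 {V : Type*} [Fintype V] (G : SimpleGraph V) [DecidableRel G.Adj]
    (hiso : ∀ v : V, ∃ u, G.Adj v u)
    (hcond : ∀ e ∈ G.edgeSet, (¬ ∃ v ∈ e, G.degree v = 1) →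
      ∃ f ∈ G.edgeSet, (∃ v ∈ f, G.degree v = 1) ∧ ∃ u : V, u ∈ e ∧ u ∈ f) :
    ∀ e ∈ G.edgeSet, ∀ S T : Set (Sym2 V), S ⊆ T → T ⊆ G.edgeSet \ {e} →
      gamma G (insert e S) + gamma G T ≤ gamma G (insert e T) + gamma G S := by
  classical
  intro e he S T hST hT
  induction e using Sym2.ind with
  | _ a b =>
    have hab : G.Adj a b := G.mem_edgeSet.mp he
    by_cases hpend : ∃ v ∈ s(a, b), G.degree v = 1
    · obtain ⟨v, hv, hvd⟩ := hpend
      rcases Sym2.mem_iff.mp hv with rfl | rfl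
      · have h1 := case1 hab hvd hT
        have h2 := gamma_add_le hab S
        omega
      · have hT' : T ⊆ G.edgeSet \ {s(v, a)} := by rwa [Sym2.eq_swap]
        have h1 := case1 hab.symm hvd hT'
        rw [← Sym2.eq_swap (a := a) (b := v)] at h1
        have h2 := gamma_add_le hab S
        omega
    · push_neg at hpend
      have hna : G.degree a ≠ 1 := hpend a (Sym2.mem_iff.mpr (Or.inl rfl))
      have hnb : G.degree b ≠ 1 := hpend b (Sym2.mem_iff.mpr (Or.inr rfl))
      obtain ⟨f, hf, ⟨v', hv'f, hv'd⟩, u', hu'e, hu'f⟩ :=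
        hcond s(a, b) he (by push_neg; exact hpend)
      have hu'v' : u' ≠ v' := by
        rintro rfl
        rcases Sym2.mem_iff.mp hu'e with rfl | rfl
        · exact hna hv'd
        · exact hnb hv'd
      have hadj : G.Adj u' v' := adj_of_mem hf hu'f hv'f hu'v'
      rcases Sym2.mem_iff.mp hu'e with rfl | rfl
      · exact case2 hab hadj hv'd hna hnb hcond hST hT
      · have hT' : T ⊆ G.edgeSet \ {s(u', a)} := by rwa [Sym2.eq_swap]
        have := case2 hab.symm hadj hv'd hnb hna hcond hST hT'
        rwa [← Sym2.eq_swap (a := a) (b := u')] at this
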